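/- For nonnegative integers k, m, s with k + 1 − m ≤ s ≤ k, the alternating sum over i from 0 to m of (−1)^i · C(2k+1, s+i) · C(k+i, k) · C(k+m−i, k) equals 0. -/

import Mathlib

open Polynomial Finset fwdDiff

private lemma prod_cast_choose (k a : ℕ) :
    ∏ t ∈ Finset.range k, ((a : ℚ) + (t + 1)) =
      (k.factorial : ℚ) * ((k + a).choose k : ℚ) := by
  induction k with
  | zero => simp
  | succ k ih =>
    rw [Finset.prod_range_succ, ih]
    have h := Nat.add_one_mul_choose_eq (k + a) k
    have h2 : k + 1 + a = k + a + 1 := by omega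
    rw [h2, Nat.factorial_succ]
    have h' := congrArg (Nat.cast : ℕ → ℚ) h
    push_cast [h2] at h' ⊢
    linear_combination (k.factorial : ℚ) * h'

private lemma fwdDiff_iter_poly_zero : ∀ (n : ℕ) (P : ℚ[X]), P.degree < n →
    (fwdDiff (1 : ℚ))^[n] (fun x => P.eval x) = 0 := by
  intro n
  induction n with
  | zero =>
    intro P hP
    have : P = 0 := Polynomial.degree_eq_bot.mp (Nat.WithBot.lt_zero_iff.mp (by simpa using hP))
    simp [this]
    rfl
  | succ n ih =>
    intro P hP
    rw [Function.iterate_succ_apply]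
    have hQ : fwdDiff (1 : ℚ) (fun x => P.eval x) = fun x => (P.comp (X + 1) - P).eval x := by
      funext x
      simp [fwdDiff, Polynomial.eval_comp]
    rw [hQ]
    apply ih
    by_cases hP0 : P = 0
    · simp [hP0]
    · have hlc : (P.comp (X + 1)).leadingCoeff = P.leadingCoeff := by
        have h1 : (X + 1 : ℚ[X]) = X + C 1 := by simp
        rw [Polynomial.leadingCoeff_comp (by rw [h1, natDegree_X_add_C]; omega)]
        rw [h1, leadingCoeff_X_add_C, one_pow, mul_one]
      have hcomp0 : P.comp (X + 1) ≠ 0 := fun h => hP0 (by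
        have := hlc
        rw [h, leadingCoeff_zero] at this
        exact leadingCoeff_eq_zero.mp this.symm)
      have hnd : (P.comp (X + 1)).natDegree = P.natDegree := by
        have h1 : (X + 1 : ℚ[X]) = X + C 1 := by simp
        rw [natDegree_comp, h1, natDegree_X_add_C, mul_one]
      have hdeg : (P.comp (X + 1)).degree = P.degree := by
        rw [degree_eq_natDegree hcomp0, degree_eq_natDegree hP0, hnd]
      have hlt := Polynomial.degree_sub_lt hdeg hcomp0 hlc
      rw [hdeg] at hlt
      have hPn : P.natDegree < n + 1 := (natDegree_lt_iff_degree_lt hP0).mpr hP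
      calc (P.comp (X + 1) - P).degree < P.degree := hlt
        _ ≤ (P.natDegree : WithBot ℕ) := degree_le_natDegree
        _ ≤ (n : WithBot ℕ) := by exact_mod_cast Nat.lt_succ_iff.mp hPn

private lemma alt_sum_poly_zero (n : ℕ) (P : ℚ[X]) (hP : P.degree < n) :
    ∑ j ∈ Finset.range (n + 1), (-1 : ℚ) ^ j * (n.choose j) * P.eval (j : ℚ) = 0 := by
  have h0 := fwdDiff_iter_poly_zero n P hP
  have h1 := fwdDiff_iter_eq_sum_shift (1 : ℚ) (fun x => P.eval x) n 0
  rw [h0] at h1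
  simp only [Pi.zero_apply, zero_add, smul_eq_mul, nsmul_eq_mul, mul_one] at h1
  have key : ∑ j ∈ Finset.range (n + 1),
      (-1 : ℚ) ^ j * (n.choose j) * P.eval (j : ℚ) =
      (-1 : ℚ) ^ n * ∑ j ∈ Finset.range (n + 1),
        ((-1 : ℤ) ^ (n - j) * (n.choose j) : ℤ) • P.eval (j : ℚ) := by
    rw [Finset.mul_sum]
    apply Finset.sum_congr rfl
    intro j hj
    have hjn : j ≤ n := Nat.lt_succ_iff.mp (Finset.mem_range.mp hj)
    have hpow : (-1 : ℚ) ^ n * (-1 : ℚ) ^ (n - j) = (-1 : ℚ) ^ j := by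
      rw [← pow_add]
      have : n + (n - j) = 2 * (n - j) + j := by omega
      rw [this, pow_add, pow_mul]
      norm_num
    simp only [zsmul_eq_mul, nsmul_eq_mul, mul_one]
    push_cast
    rw [← mul_assoc, ← mul_assoc, hpow]
  rw [key, ← h1, mul_zero]

theorem alt_sum_choose_eq_zero (k m s : ℕ) (h1 : k + 1 - m ≤ s) (h2 : s ≤ k) :
    ∑ i ∈ Finset.range (m + 1),
      (-1 : ℤ) ^ i * ((2 * k + 1).choose (s + i)) * ((k + i).choose k) *
        ((k + m - i).choose k) = 0 := by
  -- the polynomial whose values give the two binomial factors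
  set A : ℚ[X] := ∏ t ∈ Finset.range k, (X + C (((t : ℚ) + 1) - s)) with hA
  set B : ℚ[X] := ∏ t ∈ Finset.range k, (C ((m : ℚ) + s + (t + 1)) - X) with hB
  set P : ℚ[X] := A * B with hPdef
  -- degree bound
  have hdeg : P.degree < (2 * k + 1 : ℕ) := by
    have hAd : A.natDegree ≤ k := by
      refine le_trans (Polynomial.natDegree_prod_le _ _) ?_
      refine le_trans (Finset.sum_le_card_nsmul _ _ 1 ?_) (by simp)
      intro t ht
      exact (natDegree_X_add_C _).le
    have hBd : B.natDegree ≤ k := by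
      refine le_trans (Polynomial.natDegree_prod_le _ _) ?_
      refine le_trans (Finset.sum_le_card_nsmul _ _ 1 ?_) (by simp)
      intro t ht
      have : C ((m : ℚ) + s + (t + 1)) - X = -(X - C ((m : ℚ) + s + (t + 1))) := by ring
      rw [this, natDegree_neg, natDegree_X_sub_C]
    have hPd : P.natDegree ≤ 2 * k :=
      le_trans (Polynomial.natDegree_mul_le) (by omega)
    calc P.degree ≤ (P.natDegree : WithBot ℕ) := degree_le_natDegree
      _ ≤ ((2 * k : ℕ) : WithBot ℕ) := by exact_mod_cast hPd
      _ < ((2 * k + 1 : ℕ) : WithBot ℕ) := by exact_mod_cast Nat.lt_succ_self _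
  have key := alt_sum_poly_zero (2 * k + 1) P hdeg
  -- the summand as a function of j
  set g : ℕ → ℚ := fun j => (-1 : ℚ) ^ j * ((2 * k + 1).choose j) * P.eval (j : ℚ) with hg
  -- extend to a big range
  set N : ℕ := s + m + 1 + (2 * k + 2) with hN
  have hbig : ∑ j ∈ Finset.range N, g j = 0 := by
    rw [← key]
    symm
    apply Finset.sum_subset
    · exact Finset.range_subset_range.mpr (by omega)
    · intro j hjN hjout
      have hj : 2 * k + 2 ≤ j := by
        by_contra h
        exact hjout (Finset.mem_range.mpr (by omega))
      have : (2 * k + 1).choose j = 0 := Nat.choose_eq_zero_of_lt (by omega)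
      simp [hg, this]
  have hico : ∑ j ∈ Finset.Ico s (s + m + 1), g j = 0 := by
    rw [← hbig]
    apply Finset.sum_subset
    · intro j hj
      rw [Finset.mem_Ico] at hj
      exact Finset.mem_range.mpr (by omega)
    · intro j hjN hjout
      rw [Finset.mem_Ico] at hjout
      push_neg at hjout
      by_cases hlow : j < s
      · -- A vanishes
        have hAz : A.eval (j : ℚ) = 0 := by
          rw [hA, Polynomial.eval_prod]
          apply Finset.prod_eq_zero (Finset.mem_range.mpr (show s - j - 1 < k by omega))
          have hc : ((s - (j + 1) : ℕ) : ℚ) = (s : ℚ) - (j + 1) := by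
            rw [Nat.cast_sub (by omega)]
            push_cast
            ring
          have he : s - j - 1 = s - (j + 1) := by omega
          simp only [eval_add, eval_X, eval_C, he, hc]
          ring
        simp [hg, hPdef, hAz]
      · -- j ≥ s + m + 1
        have hhigh : s + m + 1 ≤ j := hjout (le_of_not_gt hlow)
        by_cases hj2 : j ≤ 2 * k + 1
        · -- B vanishes
          have hBz : B.eval (j : ℚ) = 0 := by
            rw [hB, Polynomial.eval_prod]
            apply Finset.prod_eq_zero
              (Finset.mem_range.mpr (show j - s - m - 1 < k by omega))
            have hc : ((j - (s + m + 1) : ℕ) : ℚ) = (j : ℚ) - (s + m + 1) := by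
              rw [Nat.cast_sub (by omega)]
              push_cast
              ring
            have he : j - s - m - 1 = j - (s + m + 1) := by omega
            simp only [eval_sub, eval_X, eval_C, he, hc]
            ring
          simp [hg, hPdef, hBz]
        · have : (2 * k + 1).choose j = 0 := Nat.choose_eq_zero_of_lt (by omega)
          simp [hg, this]
  rw [Finset.sum_Ico_eq_sum_range] at hico
  have hrange : s + m + 1 - s = m + 1 := by omega
  rw [hrange] at hico
  -- evaluate g (s + i)
  have heval : ∀ i ∈ Finset.range (m + 1),
      g (s + i) = (-1 : ℚ) ^ s * (k.factorial : ℚ) ^ 2 *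
        ((-1 : ℚ) ^ i * ((2 * k + 1).choose (s + i)) * ((k + i).choose k) *
          ((k + m - i).choose k)) := by
    intro i hi
    have him : i ≤ m := Nat.lt_succ_iff.mp (Finset.mem_range.mp hi)
    have hAe : A.eval ((s + i : ℕ) : ℚ) = (k.factorial : ℚ) * ((k + i).choose k : ℚ) := by
      rw [hA, Polynomial.eval_prod]
      rw [← prod_cast_choose k i]
      apply Finset.prod_congr rfl
      intro t ht
      simp only [eval_add, eval_X, eval_C]
      push_cast
      ring
    have hBe : B.eval ((s + i : ℕ) : ℚ) = (k.factorial : ℚ) * ((k + m - i).choose k : ℚ) := by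
      rw [hB, Polynomial.eval_prod]
      have hkm : k + m - i = k + (m - i) := by omega
      rw [hkm, ← prod_cast_choose k (m - i)]
      apply Finset.prod_congr rfl
      intro t ht
      simp only [eval_sub, eval_add, eval_X, eval_C]
      have hc : ((m - i : ℕ) : ℚ) = (m : ℚ) - i := by
        rw [Nat.cast_sub him]
      push_cast [hc]
      ring
    have hsign : (-1 : ℚ) ^ (s + i) = (-1 : ℚ) ^ s * (-1 : ℚ) ^ i := pow_add _ _ _
    simp only [hg, hPdef, Polynomial.eval_mul]
    rw [hAe, hBe, hsign]
    ring
  rw [Finset.sum_congr rfl heval, ← Finset.mul_sum] at hico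
  have hfac : ((-1 : ℚ) ^ s * (k.factorial : ℚ) ^ 2) ≠ 0 := by
    apply mul_ne_zero
    · exact pow_ne_zero _ (by norm_num)
    · exact pow_ne_zero _ (by exact_mod_cast Nat.factorial_pos k |>.ne')
  have hsum : ∑ i ∈ Finset.range (m + 1),
      (-1 : ℚ) ^ i * ((2 * k + 1).choose (s + i)) * ((k + i).choose k) *
        ((k + m - i).choose k) = 0 := by
    rcases mul_eq_zero.mp hico with h | h
    · exact absurd h hfac
    · exact h
  exact_mod_cast (by push_cast; exact_mod_cast hsum :
    ((∑ i ∈ Finset.range (m + 1),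
      (-1 : ℤ) ^ i * ((2 * k + 1).choose (s + i)) * ((k + i).choose k) *
        ((k + m - i).choose k) : ℤ) : ℚ) = 0)
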